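/- Let K be a field of characteristic p > 0 and let (V, θ) be a module over the distribution algebra Dist(G_(n)) of the n-th Frobenius kernel, with divided powers e_α^{(k)}. Suppose θ(e_α^{(k)}) = 0 for all k ≥ ⌊(p^n+1)/2⌋ (the n-over-restricted condition). Then for all t ∈ K and all d ∈ Dist(G_(n)): θ(ad(Z_α(t))(d)) = Y_α(t)·θ(d)·Y_α(−t), where Z_α(t) = Σ_{k=0}^{p^n−1} t^k e_α^{(k)}, Y_α(t) = θ(Z_α(t)), and the adjoint action is ad(x)(d) = Σ x_{(1)} d S(x_{(2)}), using Δ(e_α^{(k)}) = Σ_{i+j=k} e_α^{(i)} ⊗ e_α^{(j)} and S(e_α^{(k)}) = (−1)^k e_α^{(k)}. -/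

import Mathlib

open TensorProduct

/-- The Hopf-algebra adjoint action `ad(x)(d) = ∑ x₍₁₎ · d · S(x₍₂₎)`. -/
noncomputable def hopfAd (K H : Type*) [CommRing K] [Ring H] [HopfAlgebra K H]
    (x d : H) : H :=
  TensorProduct.lift
    (((LinearMap.mul K H).comp (LinearMap.mulRight K d)).compl₂
      (HopfAlgebra.antipode (R := K)))
    (Coalgebra.comul (R := K) x)

/-- For divided powers `e^{(k)} = e_α^{(k)}`, `0 ≤ k < pⁿ`, in the distribution
algebra of the `n`-th Frobenius kernel (a Hopf algebra `H`), with
`Δ(e^{(k)}) = ∑_{i+j=k} e^{(i)} ⊗ e^{(j)}` and `S(e^{(k)}) = (−1)^k e^{(k)}`, and an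
`n`-over-restricted module `(V, θ)` (i.e. `θ(e^{(k)}) = 0` for `k ≥ ⌊(pⁿ+1)/2⌋`),
conjugation by `Y_α(t) = θ(Z_α(t))`, `Z_α(t) = ∑_{k<pⁿ} t^k e^{(k)}`, realizes the
adjoint action: `θ(ad(Z_α(t))(d)) = Y_α(t)·θ(d)·Y_α(−t)` for all `t, d`. -/
theorem stmt_17 (K : Type*) [Field K] (p : ℕ) [Fact p.Prime] [CharP K p] (n : ℕ)
    (H : Type*) [Ring H] [HopfAlgebra K H]
    (V : Type*) [AddCommGroup V] [Module K V]
    (e : ℕ → H) (he0 : e 0 = 1)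
    (hcomul : ∀ k : ℕ, Coalgebra.comul (R := K) (e k) =
      ∑ ij ∈ Finset.HasAntidiagonal.antidiagonal k, e ij.1 ⊗ₜ[K] e ij.2)
    (hS : ∀ k : ℕ, HopfAlgebra.antipode (R := K) (e k) = ((-1 : K) ^ k) • e k)
    (θ : H →ₐ[K] Module.End K V)
    (hover : ∀ k : ℕ, (p ^ n + 1) / 2 ≤ k → θ (e k) = 0)
    (t : K) (d : H) :
    θ (hopfAd K H (∑ k ∈ Finset.range (p ^ n), t ^ k • e k) d) =
      (∑ k ∈ Finset.range (p ^ n), t ^ k • θ (e k)) * θ d *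
      (∑ k ∈ Finset.range (p ^ n), (-t) ^ k • θ (e k)) := by
  classical
  set N := p ^ n with hN
  set F : ℕ × ℕ → Module.End K V :=
    fun ij => (t ^ ij.1 * (-t) ^ ij.2) • (θ (e ij.1) * θ d * θ (e ij.2)) with hF
  have h1 : θ (hopfAd K H (∑ k ∈ Finset.range N, t ^ k • e k) d)
      = ∑ k ∈ Finset.range N, ∑ ij ∈ Finset.HasAntidiagonal.antidiagonal k, F ij := by
    rw [hopfAd]
    simp only [map_sum, map_smul, hcomul, TensorProduct.lift.tmul,
      LinearMap.compl₂_apply, LinearMap.comp_apply, LinearMap.mulRight_apply,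
      LinearMap.mul_apply', hS, mul_smul_comm, map_mul, Finset.smul_sum, smul_smul]
    refine Finset.sum_congr rfl fun k hk => Finset.sum_congr rfl fun ij hij => ?_
    have hk' : ij.1 + ij.2 = k := Finset.HasAntidiagonal.mem_antidiagonal.mp hij
    rw [hF]
    congr 1
    rw [← hk', pow_add, neg_pow]
    ring
  have hsub : ((Finset.range N ×ˢ Finset.range N).filter
      (fun ij => ij.1 + ij.2 < N)) ⊆ Finset.range N ×ˢ Finset.range N :=
    Finset.filter_subset _ _
  have h2 : ∑ k ∈ Finset.range N, ∑ ij ∈ Finset.HasAntidiagonal.antidiagonal k, F ij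
      = ∑ ij ∈ Finset.range N ×ˢ Finset.range N, F ij := by
    have hfib : ∀ k ∈ Finset.range N, Finset.HasAntidiagonal.antidiagonal k =
        ((Finset.range N ×ˢ Finset.range N).filter
          (fun ij => ij.1 + ij.2 < N)).filter (fun ij => ij.1 + ij.2 = k) := by
      intro k hk
      rw [Finset.mem_range] at hk
      ext ij
      simp only [Finset.HasAntidiagonal.mem_antidiagonal, Finset.mem_filter, Finset.mem_product,
        Finset.mem_range]
      omega
    rw [Finset.sum_congr rfl fun k hk => by rw [hfib k hk]]
    rw [Finset.sum_fiberwise_of_maps_to (fun ij hij => by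
      simp only [Finset.mem_filter] at hij
      exact Finset.mem_range.mpr hij.2)]
    refine Finset.sum_subset hsub fun ij hij hij' => ?_
    simp only [Finset.mem_filter, Finset.mem_product, Finset.mem_range] at hij hij'
    have : (p ^ n + 1) / 2 ≤ ij.1 ∨ (p ^ n + 1) / 2 ≤ ij.2 := by omega
    rcases this with h | h
    · simp [hF, hover _ h]
    · simp [hF, hover _ h]
  rw [h1, h2, Finset.sum_product]
  rw [Finset.sum_mul, Finset.sum_mul]
  refine Finset.sum_congr rfl fun i _ => ?_
  rw [Finset.mul_sum]
  refine Finset.sum_congr rfl fun j _ => ?_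
  simp only [hF, smul_mul_assoc, mul_smul_comm, smul_smul]
  rw [mul_comm (t ^ i)]
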